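/- Fix an integer d ≥ 2 and a real number p₀ with 1 < p₀ ≤ 2. Suppose that for every ε > 0 there exists a constant c(ε) > 0 such that for every finite field F of odd characteristic, every nontrivial additive character e of F, and every g : F^d → ℂ, one has ‖ĝ‖_{L²(P,dσ)} ≤ c(ε) |F|^ε ‖g‖_{L^{p₀}(F^d)}. Then for every p with 1 ≤ p < p₀ there exists a constant C > 0 such that for every such F, e, and g : F^d → ℂ, one has ‖ĝ‖_{L²(P,dσ)} ≤ C ‖g‖_{L^{p}(F^d)}. -/

import Mathlib

set_option maxHeartbeats 1000000


open Finset

/-- The Fourier transform `ĝ(ξ) = ∑_{x ∈ F^d} g(x) e(−x·ξ)` of `g : F^d → ℂ`, restricted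
to the paraboloid `P = {(x̄, x̄·x̄) : x̄ ∈ F^{d-1}} ⊆ F^d` and parameterized by
`ȳ ∈ F^{d-1}` (i.e. evaluated at `ξ = (ȳ, ȳ·ȳ)`). -/
noncomputable def fourierP {F : Type} [Field F] [Fintype F] {d : ℕ} (e : AddChar F ℂ)
    (g : (Fin (d - 1) → F) × F → ℂ) (y : Fin (d - 1) → F) : ℂ :=
  ∑ x : (Fin (d - 1) → F) × F, g x * e (-(∑ i, x.1 i * y i + x.2 * ∑ i, y i * y i))

/-- `‖ĝ‖_{L²(P,dσ)} = (|F|^{-(d-1)} ∑_{ξ∈P} |ĝ(ξ)|²)^{1/2}`. -/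
noncomputable def l2P {F : Type} [Field F] [Fintype F] {d : ℕ} (e : AddChar F ℂ)
    (g : (Fin (d - 1) → F) × F → ℂ) : ℝ :=
  (((Fintype.card F : ℝ) ^ (d - 1))⁻¹ *
    ∑ y : Fin (d - 1) → F, ‖fourierP e g y‖ ^ 2) ^ ((1 : ℝ) / 2)


namespace EpsRemoval

variable {F : Type} [Field F] [Fintype F]

private lemma re_mul_conj (z : ℂ) : (z * (starRingEnd ℂ) z).re = ‖z‖ ^ 2 := by
  rw [Complex.mul_conj, Complex.ofReal_re, Complex.sq_norm]

lemma char_sum_mul_eq_zero (e : AddChar F ℂ) (he : e ≠ 1) {c : F} (hc : c ≠ 0) :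
    ∑ t : F, e (c * t) = 0 := by
  have h1 : e.mulShift c ≠ 1 := fun hcon =>
    he ((AddChar.mulShift_unit_eq_one_iff e (isUnit_iff_ne_zero.mpr hc)).mp hcon)
  simpa only [AddChar.mulShift_apply] using AddChar.sum_eq_zero_of_ne_one h1

lemma char_map_sum {ι : Type*} (e : AddChar F ℂ) (s : Finset ι) (f : ι → F) :
    e (∑ i ∈ s, f i) = ∏ i ∈ s, e (f i) := by
  classical
  induction s using Finset.cons_induction with
  | empty => simp
  | cons a s ha ih => rw [Finset.sum_cons, Finset.prod_cons, AddChar.map_add_eq_mul, ih]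

lemma char_sum_dot_eq_zero (e : AddChar F ℂ) (he : e ≠ 1) {n : ℕ} {w : Fin n → F}
    (hw : w ≠ 0) : ∑ y : Fin n → F, e (∑ i, w i * y i) = 0 := by
  obtain ⟨i₀, hi₀⟩ : ∃ i, w i ≠ 0 := by
    by_contra hcon; push_neg at hcon; exact hw (funext fun i => hcon i)
  calc ∑ y : Fin n → F, e (∑ i, w i * y i)
      = ∑ y : Fin n → F, ∏ i, e (w i * y i) :=
        Finset.sum_congr rfl fun y _ => char_map_sum e _ _
    _ = ∏ i, ∑ t : F, e (w i * t) := (Fintype.prod_sum (fun i t => e (w i * t))).symm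
    _ = 0 := Finset.prod_eq_zero (Finset.mem_univ i₀) (char_sum_mul_eq_zero e he hi₀)

lemma gauss_normSq (e : AddChar F ℂ) (he : e ≠ 1) (hF : ringChar F ≠ 2) {n : ℕ}
    (w : Fin n → F) {a : F} (ha : a ≠ 0) :
    (∑ y : Fin n → F, e (∑ i, w i * y i + a * ∑ i, y i * y i)) *
      (starRingEnd ℂ) (∑ y : Fin n → F, e (∑ i, w i * y i + a * ∑ i, y i * y i)) =
      ((Fintype.card F : ℂ) ^ n) := by
  classical
  have h2 : (2 : F) ≠ 0 := Ring.two_ne_zero hF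
  set P : (Fin n → F) → F := fun y => ∑ i, w i * y i + a * ∑ i, y i * y i with hP
  have hconj : (starRingEnd ℂ) (∑ y : Fin n → F, e (P y)) = ∑ z : Fin n → F, e (-(P z)) := by
    rw [map_sum]
    exact Finset.sum_congr rfl fun z _ => (AddChar.map_neg_eq_conj e (P z)).symm
  have key : ∀ z r : Fin n → F,
      P (z + r) = P z + (P r + ∑ i, 2 * a * r i * z i) := by
    intro z r
    have h1 : ∀ i, w i * (z + r) i + a * ((z + r) i * (z + r) i)
        = (w i * z i + a * (z i * z i)) + ((w i * r i + a * (r i * r i)) + 2 * a * r i * z i) := by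
      intro i; simp only [Pi.add_apply]; ring
    calc P (z + r) = ∑ i, (w i * (z + r) i + a * ((z + r) i * (z + r) i)) := by
          rw [hP]; simp only [Finset.mul_sum, ← Finset.sum_add_distrib]
      _ = ∑ i, ((w i * z i + a * (z i * z i))
            + ((w i * r i + a * (r i * r i)) + 2 * a * r i * z i)) :=
          Finset.sum_congr rfl fun i _ => h1 i
      _ = _ := by
          simp only [hP, Finset.sum_add_distrib, Finset.mul_sum]
  calc (∑ y : Fin n → F, e (P y)) * (starRingEnd ℂ) (∑ y : Fin n → F, e (P y))
      = ∑ z : Fin n → F, ∑ y : Fin n → F, e (P y) * e (-(P z)) := by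
        rw [hconj, Fintype.sum_mul_sum]; exact Finset.sum_comm
    _ = ∑ z : Fin n → F, ∑ r : Fin n → F, e (P (z + r)) * e (-(P z)) := by
        refine Finset.sum_congr rfl fun z _ => ?_
        exact (Fintype.sum_equiv (Equiv.addLeft z)
          (fun r => e (P (z + r)) * e (-(P z))) _ (fun r => rfl)).symm
    _ = ∑ z : Fin n → F, ∑ r : Fin n → F, e (P r + ∑ i, 2 * a * r i * z i) := by
        refine Finset.sum_congr rfl fun z _ => Finset.sum_congr rfl fun r _ => ?_
        rw [← AddChar.map_add_eq_mul]
        congr 1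
        rw [key z r]; ring
    _ = ∑ r : Fin n → F, e (P r) * ∑ z : Fin n → F, e (∑ i, 2 * a * r i * z i) := by
        rw [Finset.sum_comm]
        exact Finset.sum_congr rfl fun r _ => by
          rw [Finset.mul_sum]
          exact Finset.sum_congr rfl fun z _ => AddChar.map_add_eq_mul e _ _
    _ = ∑ r : Fin n → F, if r = 0 then ((Fintype.card F : ℂ) ^ n) else 0 := by
        refine Finset.sum_congr rfl fun r _ => ?_
        by_cases hr : r = 0
        · subst hr
          rw [if_pos rfl]
          have hP0 : P 0 = 0 := by simp [hP]
          have : ∀ z : Fin n → F, (∑ i, 2 * a * (0 : Fin n → F) i * z i) = 0 := by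
            intro z; simp
          simp only [hP0, this, AddChar.map_zero_eq_one, one_mul, Finset.sum_const,
            Finset.card_univ, nsmul_eq_mul, mul_one]
          simp [Fintype.card_pi]
        · rw [if_neg hr]
          have hw2 : (fun i => 2 * a * r i) ≠ 0 := by
            intro hcon
            apply hr; funext i
            have h3 := congrFun hcon i
            simp only [Pi.zero_apply] at h3
            rcases mul_eq_zero.mp h3 with h4 | h4
            · exact absurd h4 (mul_ne_zero h2 ha)
            · exact h4
          rw [char_sum_dot_eq_zero e he hw2, mul_zero]
    _ = ((Fintype.card F : ℂ) ^ n) := by simp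


open scoped Classical in
private lemma kernel_bound (e : AddChar F ℂ) (he : e ≠ 1) (hF : ringChar F ≠ 2) {n : ℕ}
    (x x' : (Fin n → F) × F) :
    ‖∑ y : Fin n → F, e (-(∑ i, x.1 i * y i + x.2 * ∑ i, y i * y i) -
        -(∑ i, x'.1 i * y i + x'.2 * ∑ i, y i * y i))‖ ≤
      (if x = x' then ((Fintype.card F : ℝ) ^ n) else 0) +
        Real.sqrt ((Fintype.card F : ℝ) ^ n) := by
  have hcard : (0:ℝ) < (Fintype.card F : ℝ) ^ n := by positivity
  have harg : ∀ y : Fin n → F,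
      -(∑ i, x.1 i * y i + x.2 * ∑ i, y i * y i) -
        -(∑ i, x'.1 i * y i + x'.2 * ∑ i, y i * y i) =
      ∑ i, (x'.1 i - x.1 i) * y i + (x'.2 - x.2) * ∑ i, y i * y i := by
    intro y
    have hs : ∑ i, (x'.1 i - x.1 i) * y i = ∑ i, x'.1 i * y i - ∑ i, x.1 i * y i := by
      rw [← Finset.sum_sub_distrib]; exact Finset.sum_congr rfl fun i _ => sub_mul _ _ _
    rw [hs]; ring
  simp only [harg]
  by_cases ha : x.2 = x'.2
  · have ha0 : x'.2 - x.2 = 0 := by rw [ha, sub_self]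
    simp only [ha0, zero_mul, add_zero]
    by_cases hxx : x = x'
    · subst hxx
      rw [if_pos rfl]
      have h1 : ∀ y : Fin n → F, (∑ i, (x.1 i - x.1 i) * y i) = 0 := by
        intro y; simp
      simp only [h1, AddChar.map_zero_eq_one, Finset.sum_const, Finset.card_univ,
        nsmul_eq_mul, mul_one]
      have h2 : Fintype.card (Fin n → F) = Fintype.card F ^ n := by
        simp [Fintype.card_pi]
      rw [h2]
      push_cast
      rw [norm_pow, Complex.norm_natCast]
      exact le_add_of_nonneg_right (Real.sqrt_nonneg _)
    · have hw : (fun i => x'.1 i - x.1 i) ≠ 0 := by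
        intro hcon
        apply hxx
        have h1 : x.1 = x'.1 := funext fun i => by
          have h3 := congrFun hcon i
          simp only [Pi.zero_apply, sub_eq_zero] at h3
          exact h3.symm
        exact Prod.ext h1 ha
      rw [char_sum_dot_eq_zero e he hw, if_neg hxx, norm_zero, zero_add]
      exact Real.sqrt_nonneg _
  · have ha' : x'.2 - x.2 ≠ 0 := sub_ne_zero.mpr (Ne.symm ha)
    have hx : x ≠ x' := fun hcon => ha (by rw [hcon])
    rw [if_neg hx, zero_add]
    set Sv : ℂ := ∑ y : Fin n → F,
      e (∑ i, (x'.1 i - x.1 i) * y i + (x'.2 - x.2) * ∑ i, y i * y i) with hSv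
    have hG : Sv * (starRingEnd ℂ) Sv = ((Fintype.card F : ℂ) ^ n) :=
      gauss_normSq e he hF (fun i => x'.1 i - x.1 i) ha'
    have h5 : ‖Sv‖ ^ 2 = (Fintype.card F : ℝ) ^ n := by
      have h6 := re_mul_conj Sv
      rw [hG] at h6
      rw [← h6]
      norm_cast
    rw [← Real.sqrt_sq (norm_nonneg Sv), h5]

end EpsRemoval

namespace EpsRemoval2
open EpsRemoval
variable {F : Type} [Field F] [Fintype F]

private lemma sqrt_add_le (u v : ℝ) (hu : 0 ≤ u) (hv : 0 ≤ v) :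
    Real.sqrt (u + v) ≤ Real.sqrt u + Real.sqrt v := by
  have h1 := Real.sq_sqrt hu
  have h2 := Real.sq_sqrt hv
  have h3 := Real.sqrt_nonneg u
  have h4 := Real.sqrt_nonneg v
  calc Real.sqrt (u + v) ≤ Real.sqrt ((Real.sqrt u + Real.sqrt v) ^ 2) :=
        Real.sqrt_le_sqrt (by nlinarith)
    _ = _ := Real.sqrt_sq (by positivity)

open scoped Classical in
lemma stein_tomas {d : ℕ} (e : AddChar F ℂ) (he : e ≠ 1) (hF : ringChar F ≠ 2)
    (g : (Fin (d - 1) → F) × F → ℂ) :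
    l2P e g ≤ Real.sqrt (∑ x : (Fin (d - 1) → F) × F, ‖g x‖ ^ 2) +
      ((Fintype.card F : ℝ) ^ (d - 1)) ^ (-(1/4) : ℝ) *
        ∑ x : (Fin (d - 1) → F) × F, ‖g x‖ := by
  have hq : (0:ℝ) < (Fintype.card F : ℝ) := by exact_mod_cast Fintype.card_pos
  set R : ℝ := (Fintype.card F : ℝ) ^ (d - 1) with hRdef
  have hR0 : 0 < R := pow_pos hq _
  set S1 := ∑ x : (Fin (d - 1) → F) × F, ‖g x‖ with hS1
  set S2 := ∑ x : (Fin (d - 1) → F) × F, ‖g x‖ ^ 2 with hS2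
  have hS1nn : 0 ≤ S1 := Finset.sum_nonneg fun x _ => norm_nonneg _
  have hS2nn : 0 ≤ S2 := Finset.sum_nonneg fun x _ => by positivity
  have e1 : ∀ y : Fin (d - 1) → F, (fourierP e g y) * (starRingEnd ℂ) (fourierP e g y)
      = ∑ x : (Fin (d - 1) → F) × F, ∑ x' : (Fin (d - 1) → F) × F,
          (g x * (starRingEnd ℂ) (g x')) *
          e (-(∑ i, x.1 i * y i + x.2 * ∑ i, y i * y i) -
             -(∑ i, x'.1 i * y i + x'.2 * ∑ i, y i * y i)) := by
    intro y
    have hc : (starRingEnd ℂ) (fourierP e g y) = ∑ x' : (Fin (d - 1) → F) × F,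
        (starRingEnd ℂ) (g x') *
          e (- -(∑ i, x'.1 i * y i + x'.2 * ∑ i, y i * y i)) := by
      show (starRingEnd ℂ) (∑ x' : (Fin (d - 1) → F) × F,
        g x' * e (-(∑ i, x'.1 i * y i + x'.2 * ∑ i, y i * y i))) = _
      rw [map_sum]
      exact Finset.sum_congr rfl fun x' _ => by rw [map_mul, ← AddChar.map_neg_eq_conj]
    rw [hc]
    calc (fourierP e g y) * ∑ x' : (Fin (d - 1) → F) × F, (starRingEnd ℂ) (g x') *
            e (- -(∑ i, x'.1 i * y i + x'.2 * ∑ i, y i * y i))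
        = ∑ x : (Fin (d - 1) → F) × F, ∑ x' : (Fin (d - 1) → F) × F,
            (g x * e (-(∑ i, x.1 i * y i + x.2 * ∑ i, y i * y i))) *
            ((starRingEnd ℂ) (g x') *
              e (- -(∑ i, x'.1 i * y i + x'.2 * ∑ i, y i * y i))) :=
          Fintype.sum_mul_sum _ _
      _ = _ := by
          refine Finset.sum_congr rfl fun x _ => Finset.sum_congr rfl fun x' _ => ?_
          rw [sub_eq_add_neg, AddChar.map_add_eq_mul]
          ring
  have e2 : (∑ y : Fin (d - 1) → F, ‖fourierP e g y‖ ^ 2)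
      = (∑ x : (Fin (d - 1) → F) × F, ∑ x' : (Fin (d - 1) → F) × F,
          (g x * (starRingEnd ℂ) (g x')) * ∑ y : Fin (d - 1) → F,
          e (-(∑ i, x.1 i * y i + x.2 * ∑ i, y i * y i) -
             -(∑ i, x'.1 i * y i + x'.2 * ∑ i, y i * y i))).re := by
    calc ∑ y : Fin (d - 1) → F, ‖fourierP e g y‖ ^ 2
        = ∑ y : Fin (d - 1) → F, ((fourierP e g y) * (starRingEnd ℂ) (fourierP e g y)).re :=
          Finset.sum_congr rfl fun y _ => (re_mul_conj _).symm
      _ = (∑ y : Fin (d - 1) → F, (fourierP e g y) * (starRingEnd ℂ) (fourierP e g y)).re :=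
          (Complex.re_sum _ _).symm
      _ = _ := by
          refine congrArg Complex.re ?_
          rw [Finset.sum_congr rfl fun y _ => e1 y]
          refine (Finset.sum_comm).trans ?_
          refine Finset.sum_congr rfl fun x _ => ?_
          refine (Finset.sum_comm).trans ?_
          exact Finset.sum_congr rfl fun x' _ => (Finset.mul_sum _ _ _).symm
  have hT : (∑ y : Fin (d - 1) → F, ‖fourierP e g y‖ ^ 2) ≤ R * S2 + Real.sqrt R * S1 ^ 2 := by
    rw [e2]
    have step1 := Complex.re_le_norm (∑ x : (Fin (d - 1) → F) × F,
      ∑ x' : (Fin (d - 1) → F) × F,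
        (g x * (starRingEnd ℂ) (g x')) * ∑ y : Fin (d - 1) → F,
          e (-(∑ i, x.1 i * y i + x.2 * ∑ i, y i * y i) -
             -(∑ i, x'.1 i * y i + x'.2 * ∑ i, y i * y i)))
    refine step1.trans ?_
    refine ((norm_sum_le _ _).trans (Finset.sum_le_sum fun x _ => norm_sum_le _ _)).trans ?_
    have step2 : ∀ x x' : (Fin (d - 1) → F) × F,
        ‖(g x * (starRingEnd ℂ) (g x')) * ∑ y : Fin (d - 1) → F,
          e (-(∑ i, x.1 i * y i + x.2 * ∑ i, y i * y i) -
             -(∑ i, x'.1 i * y i + x'.2 * ∑ i, y i * y i))‖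
        ≤ ‖g x‖ * ‖g x'‖ * ((if x = x' then R else 0) + Real.sqrt R) := by
      intro x x'
      rw [norm_mul, norm_mul, RCLike.norm_conj]
      exact mul_le_mul_of_nonneg_left (kernel_bound e he hF x x') (by positivity)
    refine (Finset.sum_le_sum fun x _ => Finset.sum_le_sum fun x' _ => step2 x x').trans ?_
    have step3 : ∑ x : (Fin (d - 1) → F) × F, ∑ x' : (Fin (d - 1) → F) × F,
        ‖g x‖ * ‖g x'‖ * ((if x = x' then R else 0) + Real.sqrt R)
        = R * S2 + Real.sqrt R * S1 ^ 2 := by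
      simp only [mul_add, Finset.sum_add_distrib]
      congr 1
      · have h8 : ∀ x : (Fin (d - 1) → F) × F,
            ∑ x' : (Fin (d - 1) → F) × F, ‖g x‖ * ‖g x'‖ * (if x = x' then R else 0)
              = R * ‖g x‖ ^ 2 := by
          intro x
          rw [Finset.sum_eq_single x]
          · rw [if_pos rfl]; ring
          · intro b _ hb
            rw [if_neg (fun hh => hb hh.symm), mul_zero]
          · intro hx; exact absurd (Finset.mem_univ x) hx
        rw [Finset.sum_congr rfl fun x _ => h8 x, ← Finset.mul_sum]
      · rw [sq, Fintype.sum_mul_sum, Finset.mul_sum]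
        exact Finset.sum_congr rfl fun x _ => by
          rw [Finset.mul_sum]
          exact Finset.sum_congr rfl fun x' _ => by ring
    exact le_of_eq step3
  rw [show l2P e g = (R⁻¹ * ∑ y : Fin (d - 1) → F, ‖fourierP e g y‖ ^ 2) ^ ((1:ℝ)/2) from rfl,
    ← Real.sqrt_eq_rpow]
  have step4 : R⁻¹ * (∑ y : Fin (d - 1) → F, ‖fourierP e g y‖ ^ 2)
      ≤ S2 + (R⁻¹ * Real.sqrt R) * S1 ^ 2 := by
    calc R⁻¹ * (∑ y : Fin (d - 1) → F, ‖fourierP e g y‖ ^ 2)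
        ≤ R⁻¹ * (R * S2 + Real.sqrt R * S1 ^ 2) :=
          mul_le_mul_of_nonneg_left hT (inv_nonneg.mpr hR0.le)
      _ = S2 + (R⁻¹ * Real.sqrt R) * S1 ^ 2 := by
          rw [mul_add, ← mul_assoc, inv_mul_cancel₀ hR0.ne', one_mul, ← mul_assoc]
  calc Real.sqrt (R⁻¹ * ∑ y : Fin (d - 1) → F, ‖fourierP e g y‖ ^ 2)
      ≤ Real.sqrt (S2 + (R⁻¹ * Real.sqrt R) * S1 ^ 2) := Real.sqrt_le_sqrt step4
    _ ≤ Real.sqrt S2 + Real.sqrt ((R⁻¹ * Real.sqrt R) * S1 ^ 2) :=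
        sqrt_add_le _ _ hS2nn (by positivity)
    _ = Real.sqrt S2 + Real.sqrt (R⁻¹ * Real.sqrt R) * S1 := by
        rw [Real.sqrt_mul (by positivity), Real.sqrt_sq hS1nn]
    _ = Real.sqrt S2 + R ^ (-(1/4) : ℝ) * S1 := by
        congr 2
        have h7 : R⁻¹ * Real.sqrt R = R ^ (-(1/2) : ℝ) := by
          rw [Real.sqrt_eq_rpow, ← Real.rpow_neg_one R, ← Real.rpow_add hR0]
          norm_num
        rw [h7, Real.sqrt_eq_rpow, ← Real.rpow_mul hR0.le]
        norm_num

end EpsRemoval2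

namespace EpsRemoval3
open EpsRemoval EpsRemoval2
variable {F : Type} [Field F] [Fintype F]

private lemma rpow_rpow_inv {x r : ℝ} (hx : 0 ≤ x) (hr : r ≠ 0) : (x ^ r) ^ (1 / r) = x := by
  rw [← Real.rpow_mul hx, mul_one_div, div_self hr, Real.rpow_one]

lemma l2P_add {d : ℕ} (e : AddChar F ℂ) (s t : (Fin (d - 1) → F) × F → ℂ) :
    l2P e (fun x => s x + t x) ≤ l2P e s + l2P e t := by
  have hc0 : (0:ℝ) ≤ (((Fintype.card F : ℝ) ^ (d - 1))⁻¹) := by positivity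
  let v : ((Fin (d - 1) → F) × F → ℂ) → EuclideanSpace ℂ (Fin (d - 1) → F) :=
    fun g => WithLp.toLp 2 (fun y => fourierP e g y)
  have hnorm : ∀ g : (Fin (d - 1) → F) × F → ℂ,
      l2P e g = Real.sqrt (((Fintype.card F : ℝ) ^ (d - 1))⁻¹) * ‖v g‖ := by
    intro g
    rw [show l2P e g = ((((Fintype.card F : ℝ) ^ (d - 1))⁻¹) *
        ∑ y : Fin (d - 1) → F, ‖fourierP e g y‖ ^ 2) ^ ((1:ℝ)/2) from rfl,
      ← Real.sqrt_eq_rpow, EuclideanSpace.norm_eq, Real.sqrt_mul hc0]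
  have hadd : v (fun x => s x + t x) = v s + v t := by
    ext y
    show fourierP e (fun x => s x + t x) y = fourierP e s y + fourierP e t y
    show (∑ x : (Fin (d - 1) → F) × F, (s x + t x) *
        e (-(∑ i, x.1 i * y i + x.2 * ∑ i, y i * y i)))
      = (∑ x : (Fin (d - 1) → F) × F, s x *
          e (-(∑ i, x.1 i * y i + x.2 * ∑ i, y i * y i)))
        + ∑ x : (Fin (d - 1) → F) × F, t x *
            e (-(∑ i, x.1 i * y i + x.2 * ∑ i, y i * y i))
    rw [← Finset.sum_add_distrib]
    exact Finset.sum_congr rfl fun x _ => add_mul _ _ _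
  rw [hnorm, hnorm, hnorm, hadd]
  calc Real.sqrt (((Fintype.card F : ℝ) ^ (d - 1))⁻¹) * ‖v s + v t‖
      ≤ Real.sqrt (((Fintype.card F : ℝ) ^ (d - 1))⁻¹) * (‖v s‖ + ‖v t‖) :=
        mul_le_mul_of_nonneg_left (norm_add_le _ _) (Real.sqrt_nonneg _)
    _ = _ := mul_add _ _ _

end EpsRemoval3

open EpsRemoval EpsRemoval2 EpsRemoval3

/-- Epsilon removal: fix `d ≥ 2` and `1 < p₀ ≤ 2`. If for every `ε > 0` there is
`c(ε) > 0` with `‖ĝ‖_{L²(P,dσ)} ≤ c(ε) |F|^ε ‖g‖_{L^{p₀}(F^d)}` for all finite fields `F`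
of odd characteristic, all nontrivial additive characters, and all `g`, then for every
`1 ≤ p < p₀` there is `C > 0` with `‖ĝ‖_{L²(P,dσ)} ≤ C ‖g‖_{L^p(F^d)}` for all such
`F`, `e`, `g`. -/
theorem stmt17 (d : ℕ) (hd : 2 ≤ d) (p₀ : ℝ) (hp₀ : 1 < p₀) (hp₀' : p₀ ≤ 2)
    (h : ∀ ε : ℝ, 0 < ε → ∃ c : ℝ, 0 < c ∧
      ∀ (F : Type) [Field F] [Fintype F], ringChar F ≠ 2 →
      ∀ (e : AddChar F ℂ), e ≠ 1 →
      ∀ g : (Fin (d - 1) → F) × F → ℂ,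
        l2P e g ≤ c * (Fintype.card F : ℝ) ^ ε *
          (∑ x : (Fin (d - 1) → F) × F, ‖g x‖ ^ p₀) ^ (1 / p₀)) :
    ∀ p : ℝ, 1 ≤ p → p < p₀ →
      ∃ C : ℝ, 0 < C ∧
        ∀ (F : Type) [Field F] [Fintype F], ringChar F ≠ 2 →
        ∀ (e : AddChar F ℂ), e ≠ 1 →
        ∀ g : (Fin (d - 1) → F) × F → ℂ,
          l2P e g ≤ C * (∑ x : (Fin (d - 1) → F) × F, ‖g x‖ ^ p) ^ (1 / p) := by
  intro p hp1 hpp0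
  have hp0pos : (0:ℝ) < p₀ := lt_trans one_pos hp₀
  have hppos : (0:ℝ) < p := lt_of_lt_of_le one_pos hp1
  have hDpos : (0:ℝ) < ((d - 1 : ℕ) : ℝ) := by
    have h1 : 0 < d - 1 := by omega
    exact_mod_cast h1
  have hεpos : (0:ℝ) < ((d - 1 : ℕ) : ℝ) / (4 * p) * ((p₀ - p) / p₀) :=
    mul_pos (div_pos hDpos (by positivity)) (div_pos (by linarith) hp0pos)
  obtain ⟨c, hc, hmain⟩ := h (((d - 1 : ℕ) : ℝ) / (4 * p) * ((p₀ - p) / p₀)) hεpos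
  refine ⟨c + 2, by linarith, ?_⟩
  intro F _ _ hF e he g
  classical
  have hq : (0:ℝ) < (Fintype.card F : ℝ) := by exact_mod_cast Fintype.card_pos
  have hq1 : (1:ℝ) ≤ (Fintype.card F : ℝ) := by
    have h1 : 1 ≤ Fintype.card F := Fintype.card_pos
    exact_mod_cast h1
  set Sp : ℝ := ∑ x : (Fin (d - 1) → F) × F, ‖g x‖ ^ p with hSpdef
  have hSpnn : (0:ℝ) ≤ Sp := Finset.sum_nonneg fun x _ => Real.rpow_nonneg (norm_nonneg _) p
  set A : ℝ := Sp ^ (1 / p) with hAdef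
  by_cases hSp0 : Sp = 0
  · -- g vanishes identically
    have hg0 : ∀ x, g x = 0 := by
      intro x
      have h1 : ∀ x ∈ Finset.univ, (0:ℝ) ≤ ‖g x‖ ^ p :=
        fun x _ => Real.rpow_nonneg (norm_nonneg _) _
      have h2 := (Finset.sum_eq_zero_iff_of_nonneg h1).mp (hSpdef ▸ hSp0) x (Finset.mem_univ x)
      have h3 : ‖g x‖ = 0 := by
        by_contra hne
        have h4 : (0:ℝ) < ‖g x‖ := lt_of_le_of_ne (norm_nonneg _) (Ne.symm hne)
        exact absurd h2 (ne_of_gt (Real.rpow_pos_of_pos h4 p))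
      exact norm_eq_zero.mp h3
    have hsum0 : ∑ y : Fin (d - 1) → F, ‖fourierP e g y‖ ^ 2 = 0 := by
      refine Finset.sum_eq_zero fun y _ => ?_
      have h5 : fourierP e g y = 0 := Finset.sum_eq_zero fun x _ => by rw [hg0 x, zero_mul]
      rw [h5, norm_zero]
      norm_num
    have hl0 : l2P e g = 0 := by
      rw [show l2P e g = ((((Fintype.card F : ℝ) ^ (d - 1))⁻¹) *
          ∑ y : Fin (d - 1) → F, ‖fourierP e g y‖ ^ 2) ^ ((1:ℝ)/2) from rfl,
        hsum0, mul_zero, Real.zero_rpow (by norm_num)]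
    have hA0 : A = 0 := by rw [hAdef, hSp0, Real.zero_rpow (one_div_ne_zero hppos.ne')]
    rw [hl0, hA0, mul_zero]
  · have hSppos : (0:ℝ) < Sp := lt_of_le_of_ne hSpnn (Ne.symm hSp0)
    have hApos : (0:ℝ) < A := Real.rpow_pos_of_pos hSppos _
    have hAp : A ^ p = Sp := by
      rw [hAdef, ← Real.rpow_mul hSpnn, one_div, inv_mul_cancel₀ hppos.ne', Real.rpow_one]
    have hginf : ∀ x, ‖g x‖ ≤ A := by
      intro x
      have h1 : ‖g x‖ ^ p ≤ Sp := by
        rw [hSpdef]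
        exact Finset.single_le_sum (fun i _ => Real.rpow_nonneg (norm_nonneg _) _)
          (Finset.mem_univ x)
      calc ‖g x‖ = (‖g x‖ ^ p) ^ (1 / p) := (rpow_rpow_inv (norm_nonneg _) hppos.ne').symm
        _ ≤ Sp ^ (1 / p) :=
            Real.rpow_le_rpow (Real.rpow_nonneg (norm_nonneg _) _) h1 (by positivity)
        _ = A := hAdef.symm
    set t : ℝ := (Fintype.card F : ℝ) ^ (-(((d - 1 : ℕ) : ℝ) / (4 * p))) * A with htdef
    have htpos : (0:ℝ) < t := mul_pos (Real.rpow_pos_of_pos hq _) hApos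
    set s : ((Fin (d - 1) → F) × F) → ℂ := fun x => if ‖g x‖ ≤ t then g x else 0 with hsdef
    set h' : ((Fin (d - 1) → F) × F) → ℂ := fun x => if ‖g x‖ ≤ t then 0 else g x with hh'def
    have hsplit : l2P e g ≤ l2P e s + l2P e h' := by
      have hgst : g = fun x => s x + h' x := by
        funext x
        show g x = (if ‖g x‖ ≤ t then g x else 0) + (if ‖g x‖ ≤ t then 0 else g x)
        by_cases hx : ‖g x‖ ≤ t
        · rw [if_pos hx, if_pos hx, add_zero]
        · rw [if_neg hx, if_neg hx, zero_add]
      calc l2P e g = l2P e (fun x => s x + h' x) := by rw [← hgst]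
        _ ≤ _ := l2P_add e s h'
    -- small part
    have hs_bound : l2P e s ≤ c * A := by
      have h1 : ∑ x : (Fin (d - 1) → F) × F, ‖s x‖ ^ p₀ ≤ t ^ (p₀ - p) * Sp := by
        rw [hSpdef, Finset.mul_sum]
        refine Finset.sum_le_sum fun x _ => ?_
        by_cases hx : ‖g x‖ ≤ t
        · have hsx : s x = g x := if_pos hx
          rw [hsx]
          rcases eq_or_lt_of_le (norm_nonneg (g x)) with h0 | h0
          · rw [← h0, Real.zero_rpow hp0pos.ne', Real.zero_rpow hppos.ne', mul_zero]
          · have h5 : ‖g x‖ ^ p₀ = ‖g x‖ ^ (p₀ - p) * ‖g x‖ ^ p := by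
              rw [← Real.rpow_add h0, show p₀ - p + p = p₀ by ring]
            rw [h5]
            exact mul_le_mul_of_nonneg_right
              (Real.rpow_le_rpow (norm_nonneg _) hx (by linarith))
              (Real.rpow_nonneg (norm_nonneg _) _)
        · have hsx : s x = 0 := if_neg hx
          rw [hsx, norm_zero, Real.zero_rpow hp0pos.ne']
          positivity
      have h3 : t ^ (p₀ - p) * Sp =
          ((Fintype.card F : ℝ) ^ (-(((d - 1 : ℕ) : ℝ) / (4 * p) * ((p₀ - p) / p₀))) * A)
            ^ p₀ := by
        rw [htdef, ← hAp,
          Real.mul_rpow (Real.rpow_nonneg hq.le _) hApos.le,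
          Real.mul_rpow (Real.rpow_nonneg hq.le _) hApos.le,
          ← Real.rpow_mul hq.le, ← Real.rpow_mul hq.le,
          mul_assoc, ← Real.rpow_add hApos, show p₀ - p + p = p₀ by ring]
        congr 2
        field_simp
      have h2 : (∑ x : (Fin (d - 1) → F) × F, ‖s x‖ ^ p₀) ^ (1 / p₀) ≤
          (Fintype.card F : ℝ) ^ (-(((d - 1 : ℕ) : ℝ) / (4 * p) * ((p₀ - p) / p₀))) * A := by
        calc (∑ x : (Fin (d - 1) → F) × F, ‖s x‖ ^ p₀) ^ (1 / p₀)
            ≤ (t ^ (p₀ - p) * Sp) ^ (1 / p₀) :=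
              Real.rpow_le_rpow
                (Finset.sum_nonneg fun x _ => Real.rpow_nonneg (norm_nonneg _) _)
                h1 (by positivity)
          _ = _ := by rw [h3, rpow_rpow_inv (by positivity) hp0pos.ne']
      calc l2P e s
          ≤ c * (Fintype.card F : ℝ) ^ (((d - 1 : ℕ) : ℝ) / (4 * p) * ((p₀ - p) / p₀)) *
              (∑ x : (Fin (d - 1) → F) × F, ‖s x‖ ^ p₀) ^ (1 / p₀) := hmain F hF e he s
        _ ≤ c * (Fintype.card F : ℝ) ^ (((d - 1 : ℕ) : ℝ) / (4 * p) * ((p₀ - p) / p₀)) *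
              ((Fintype.card F : ℝ) ^ (-(((d - 1 : ℕ) : ℝ) / (4 * p) * ((p₀ - p) / p₀))) * A) :=
            mul_le_mul_of_nonneg_left h2 (by positivity)
        _ = c * A := by
            have h6 : (Fintype.card F : ℝ) ^ (((d - 1 : ℕ) : ℝ) / (4 * p) * ((p₀ - p) / p₀)) *
                ((Fintype.card F : ℝ) ^ (-(((d - 1 : ℕ) : ℝ) / (4 * p) * ((p₀ - p) / p₀))) * A)
                = A := by
              rw [← mul_assoc, ← Real.rpow_add hq,
                show ((d - 1 : ℕ) : ℝ) / (4 * p) * ((p₀ - p) / p₀) +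
                  -(((d - 1 : ℕ) : ℝ) / (4 * p) * ((p₀ - p) / p₀)) = 0 by ring,
                Real.rpow_zero, one_mul]
            rw [mul_assoc, h6]
    -- large part
    have hh_S2 : ∑ x : (Fin (d - 1) → F) × F, ‖h' x‖ ^ 2 ≤ A ^ 2 := by
      have hpt : ∀ x : (Fin (d - 1) → F) × F,
          ‖h' x‖ ^ 2 ≤ A ^ ((2:ℝ) - p) * ‖g x‖ ^ p := by
        intro x
        by_cases hx : ‖g x‖ ≤ t
        · have h5 : h' x = 0 := if_pos hx
          rw [h5, norm_zero]
          have h6 : (0:ℝ) ^ 2 = 0 := by norm_num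
          rw [h6]
          positivity
        · have hhx : h' x = g x := if_neg hx
          have h0 : (0:ℝ) < ‖g x‖ := lt_trans htpos (not_le.mp hx)
          rw [hhx]
          calc ‖g x‖ ^ 2 = ‖g x‖ ^ ((2:ℝ)) := by
                rw [← Real.rpow_natCast ‖g x‖ 2]
                norm_num
            _ = ‖g x‖ ^ ((2:ℝ) - p) * ‖g x‖ ^ p := by
                rw [← Real.rpow_add h0, show (2:ℝ) - p + p = 2 by ring]
            _ ≤ A ^ ((2:ℝ) - p) * ‖g x‖ ^ p :=
                mul_le_mul_of_nonneg_right
                  (Real.rpow_le_rpow (norm_nonneg _) (hginf x) (by linarith))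
                  (Real.rpow_nonneg (norm_nonneg _) _)
      calc ∑ x : (Fin (d - 1) → F) × F, ‖h' x‖ ^ 2
          ≤ ∑ x : (Fin (d - 1) → F) × F, A ^ ((2:ℝ) - p) * ‖g x‖ ^ p :=
            Finset.sum_le_sum fun x _ => hpt x
        _ = A ^ ((2:ℝ) - p) * Sp := by rw [← Finset.mul_sum, ← hSpdef]
        _ = A ^ 2 := by
            rw [← hAp, ← Real.rpow_add hApos, show (2:ℝ) - p + p = 2 by ring,
              ← Real.rpow_natCast A 2]
            norm_num
    have hh_S1 : ∑ x : (Fin (d - 1) → F) × F, ‖h' x‖ ≤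
        (Fintype.card F : ℝ) ^ (((d - 1 : ℕ) : ℝ) / (4 * p) * (p - 1)) * A := by
      have hpt : ∀ x : (Fin (d - 1) → F) × F,
          ‖h' x‖ ≤ t ^ ((1:ℝ) - p) * ‖g x‖ ^ p := by
        intro x
        by_cases hx : ‖g x‖ ≤ t
        · have h5 : h' x = 0 := if_pos hx
          rw [h5, norm_zero]
          positivity
        · have hhx : h' x = g x := if_neg hx
          have h0 : (0:ℝ) < ‖g x‖ := lt_trans htpos (not_le.mp hx)
          rw [hhx]
          calc ‖g x‖ = ‖g x‖ ^ ((1:ℝ) - p) * ‖g x‖ ^ p := by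
                rw [← Real.rpow_add h0, show (1:ℝ) - p + p = 1 by ring, Real.rpow_one]
            _ ≤ t ^ ((1:ℝ) - p) * ‖g x‖ ^ p :=
                mul_le_mul_of_nonneg_right
                  (Real.rpow_le_rpow_of_nonpos htpos (le_of_lt (not_le.mp hx)) (by linarith))
                  (Real.rpow_nonneg (norm_nonneg _) _)
      calc ∑ x : (Fin (d - 1) → F) × F, ‖h' x‖
          ≤ ∑ x : (Fin (d - 1) → F) × F, t ^ ((1:ℝ) - p) * ‖g x‖ ^ p :=
            Finset.sum_le_sum fun x _ => hpt x
        _ = t ^ ((1:ℝ) - p) * Sp := by rw [← Finset.mul_sum, ← hSpdef]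
        _ = (Fintype.card F : ℝ) ^ (((d - 1 : ℕ) : ℝ) / (4 * p) * (p - 1)) * A := by
            rw [htdef, ← hAp, Real.mul_rpow (Real.rpow_nonneg hq.le _) hApos.le,
              ← Real.rpow_mul hq.le, mul_assoc, ← Real.rpow_add hApos,
              show (1:ℝ) - p + p = 1 by ring, Real.rpow_one,
              show -(((d - 1 : ℕ) : ℝ) / (4 * p)) * ((1:ℝ) - p) =
                ((d - 1 : ℕ) : ℝ) / (4 * p) * (p - 1) by ring]
    have hh_bound : l2P e h' ≤ 2 * A := by
      refine (stein_tomas e he hF h').trans ?_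
      have h9 : Real.sqrt (∑ x : (Fin (d - 1) → F) × F, ‖h' x‖ ^ 2) ≤ A :=
        (Real.sqrt_le_sqrt hh_S2).trans (le_of_eq (Real.sqrt_sq hApos.le))
      have h10 : ((Fintype.card F : ℝ) ^ (d - 1)) ^ (-(1/4) : ℝ) *
          ∑ x : (Fin (d - 1) → F) × F, ‖h' x‖ ≤ A := by
        have h11 : ((Fintype.card F : ℝ) ^ (d - 1)) ^ (-(1/4) : ℝ) =
            (Fintype.card F : ℝ) ^ (((d - 1 : ℕ) : ℝ) * (-(1/4))) := by
          rw [← Real.rpow_natCast (Fintype.card F : ℝ) (d - 1), ← Real.rpow_mul hq.le]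
        calc ((Fintype.card F : ℝ) ^ (d - 1)) ^ (-(1/4) : ℝ) *
            ∑ x : (Fin (d - 1) → F) × F, ‖h' x‖
            ≤ ((Fintype.card F : ℝ) ^ (d - 1)) ^ (-(1/4) : ℝ) *
              ((Fintype.card F : ℝ) ^ (((d - 1 : ℕ) : ℝ) / (4 * p) * (p - 1)) * A) :=
              mul_le_mul_of_nonneg_left hh_S1 (by positivity)
          _ = (Fintype.card F : ℝ) ^ (((d - 1 : ℕ) : ℝ) * (-(1/4)) +
                ((d - 1 : ℕ) : ℝ) / (4 * p) * (p - 1)) * A := by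
              rw [h11, ← mul_assoc, ← Real.rpow_add hq]
          _ ≤ 1 * A := by
              refine mul_le_mul_of_nonneg_right ?_ hApos.le
              refine Real.rpow_le_one_of_one_le_of_nonpos hq1 ?_
              have hpe : ((d - 1 : ℕ) : ℝ) * (-(1/4)) +
                  ((d - 1 : ℕ) : ℝ) / (4 * p) * (p - 1) = -(((d - 1 : ℕ) : ℝ) / (4 * p)) := by
                field_simp
                ring
              rw [hpe]
              exact neg_nonpos.mpr (by positivity)
          _ = A := one_mul A
      calc Real.sqrt (∑ x : (Fin (d - 1) → F) × F, ‖h' x‖ ^ 2) +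
            ((Fintype.card F : ℝ) ^ (d - 1)) ^ (-(1/4) : ℝ) *
              ∑ x : (Fin (d - 1) → F) × F, ‖h' x‖
          ≤ A + A := add_le_add h9 h10
        _ = 2 * A := by ring
    calc l2P e g ≤ l2P e s + l2P e h' := hsplit
      _ ≤ c * A + 2 * A := add_le_add hs_bound hh_bound
      _ = (c + 2) * A := by ring
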